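/- Let w : E → ℝ be three times differentiable with w(x) ≥ 0 for every x ∈ E, and let M ≥ 0 be a constant such that w(y) ≤ w(x) + Dw(x)(y − x) + (1/2)·D²w(x)(y − x, y − x) + (1/6)·D³w(x)(y − x, y − x, y − x) + M·‖y − x‖⁴ for all x, y ∈ E. Then for every x ∈ E and every unit vector v ∈ E one has D²w(x)(v, v) ≥ −4·(M·w(x))^(1/2). (Lower bound on the Hessian eigenvalues of a nonnegative function with quartic Taylor remainder; step (25-5-9) in the proof of Proposition 5.1.) -/

import Mathlib

/-- Lower bound on the Hessian eigenvalues of a nonnegative function with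
quartic Taylor remainder (step (25-5-9) in the proof of Proposition 5.1): if
`w ≥ 0` is three times differentiable and
`w(y) ≤ w(x) + Dw(x)(y−x) + (1/2)·D²w(x)(y−x,y−x) + (1/6)·D³w(x)(y−x,y−x,y−x)
  + M·‖y−x‖⁴` for all `x, y`,
then `D²w(x)(v, v) ≥ −4·(M·w(x))^(1/2)` for every unit vector `v`. -/
theorem hessian_lower_bound_quartic_remainder {E : Type*} [NormedAddCommGroup E]
    [InnerProductSpace ℝ E]
    (w : E → ℝ) (hw : Differentiable ℝ w)
    (hw' : Differentiable ℝ (fderiv ℝ w))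
    (hw'' : Differentiable ℝ (fderiv ℝ (fderiv ℝ w)))
    (hw0 : ∀ x, 0 ≤ w x) (M : ℝ) (hM : 0 ≤ M)
    (htaylor : ∀ x y, w y ≤ w x + fderiv ℝ w x (y - x)
      + (1 / 2) * fderiv ℝ (fderiv ℝ w) x (y - x) (y - x)
      + (1 / 6) * fderiv ℝ (fderiv ℝ (fderiv ℝ w)) x (y - x) (y - x) (y - x)
      + M * ‖y - x‖ ^ 4) :
    ∀ x v, ‖v‖ = 1 →
      -(4 * (M * w x) ^ ((1 : ℝ) / 2)) ≤ fderiv ℝ (fderiv ℝ w) x v v := by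
  intro x v hv
  set a := w x with ha
  set c := fderiv ℝ (fderiv ℝ w) x v v with hc
  have key : ∀ t : ℝ, 0 ≤ 2 * a + t ^ 2 * c + 2 * M * t ^ 4 := by
    intro t
    have h1 := htaylor x (x + t • v)
    have h2 := htaylor x (x + (-t) • v)
    have e1 : x + t • v - x = t • v := by abel
    have e2 : x + (-t) • v - x = (-t) • v := by abel
    rw [e1] at h1
    rw [e2] at h2
    simp only [map_smul, ContinuousLinearMap.smul_apply, smul_eq_mul] at h1 h2
    have hn1 : ‖t • v‖ ^ 4 = t ^ 4 := by
      rw [norm_smul, hv, mul_one, Real.norm_eq_abs, ← abs_pow]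
      exact abs_of_nonneg (by positivity)
    have hn2 : ‖(-t) • v‖ ^ 4 = t ^ 4 := by
      rw [norm_smul, hv, mul_one, Real.norm_eq_abs, ← abs_pow,
        show (-t) ^ 4 = t ^ 4 by ring]
      exact abs_of_nonneg (by positivity)
    rw [hn1] at h1
    rw [hn2] at h2
    have p1 := hw0 (x + t • v)
    have p2 := hw0 (x + (-t) • v)
    nlinarith [h1, h2, p1, p2]
  have ha0 : 0 ≤ a := hw0 x
  by_cases hM0 : M = 0
  · -- M = 0 : show 0 ≤ c by taking t large
    rw [hM0, zero_mul, Real.zero_rpow (by norm_num), mul_zero, neg_zero]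
    by_contra h
    push_neg at h
    have hcpos : 0 < -c := by linarith
    have := key (Real.sqrt ((2 * a + 1) / (-c)))
    rw [Real.sq_sqrt (le_of_lt (div_pos (by linarith) hcpos))] at this
    rw [hM0] at this
    have hc0 : -c ≠ 0 := ne_of_gt hcpos
    have hdiv : (2 * a + 1) / (-c) * c = -(2 * a + 1) := by
      field_simp
      rw [div_self (neg_ne_zero.mp hc0)]
    nlinarith [this]
  · have hM' : 0 < M := lt_of_le_of_ne hM (Ne.symm hM0)
    by_cases ha0' : a = 0
    · -- a = 0, M > 0 : show 0 ≤ c by taking t small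
      rw [ha0', mul_zero, Real.zero_rpow (by norm_num), mul_zero, neg_zero]
      by_contra h
      push_neg at h
      have hcpos : 0 < -c := by linarith
      have hpos : 0 < -c / (4 * M) := div_pos hcpos (by linarith)
      have := key (Real.sqrt (-c / (4 * M)))
      rw [Real.sq_sqrt hpos.le] at this
      have ht4 : Real.sqrt (-c / (4 * M)) ^ 4 = (-c / (4 * M)) ^ 2 := by
        rw [show (4 : ℕ) = 2 * 2 from rfl, pow_mul, Real.sq_sqrt hpos.le]
      rw [ht4, ha0'] at this
      have hsq : 2 * M * (-c / (4 * M)) ^ 2 = (-c / (4 * M)) * (-c / 2) := by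
        field_simp
        ring
      rw [hsq] at this
      -- this : 0 ≤ 2*0 + (-c/(4M))*c + (-c/(4M))*(-c/2)
      nlinarith [this, mul_pos hpos (show (0:ℝ) < -c / 2 by linarith)]
    · -- M > 0 and a > 0
      have ha' : 0 < a := lt_of_le_of_ne ha0 (Ne.symm ha0')
      set u := Real.sqrt (a / M) with hu
      have hupos : 0 < u := Real.sqrt_pos.mpr (by positivity)
      have hu2 : u ^ 2 = a / M := Real.sq_sqrt (by positivity)
      have hk := key (Real.sqrt u)
      rw [Real.sq_sqrt hupos.le] at hk
      have ht4 : Real.sqrt u ^ 4 = u ^ 2 := by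
        rw [show (4 : ℕ) = 2 * 2 from rfl, pow_mul, Real.sq_sqrt hupos.le]
      rw [ht4, hu2] at hk
      have h2a : 2 * M * (a / M) = 2 * a := by
        field_simp
      have h4a : 0 ≤ 4 * a + u * c := by linarith [hk, h2a]
      have hrs : (M * a) ^ ((1 : ℝ) / 2) = Real.sqrt (M * a) := by
        rw [Real.sqrt_eq_rpow]
      rw [hrs]
      have hsu : Real.sqrt (M * a) * u = a := by
        rw [hu, ← Real.sqrt_mul (by positivity),
          show M * a * (a / M) = a ^ 2 by field_simp]
        exact Real.sqrt_sq ha0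
      nlinarith [h4a, hsu, hupos, Real.sqrt_nonneg (M * a)]
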